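/- Let d ≥ 1 and N ≥ 0. Index the N-fold tensor power of ℂ^d by functions f : Fin N → Fin d, and for a permutation π of Fin N let U_π be the 0–1 matrix with entry (f,g) equal to 1 iff g = f ∘ π. Let P₊^{(N)} := (1/N!)·∑_{π ∈ S_N} U_π be the symmetrizer. Then the trace of P₊^{(N)} equals the binomial coefficient C(d+N−1, N). (The dimension of the symmetric subspace of N d-dimensional systems is d₊^{(N)} = C(d+N−1, N).) -/

import Mathlib

open Matrix
open scoped Kronecker ComplexOrder

/-- The permutation matrix on the N-fold tensor power of ℂ^d associated to a
permutation π of the tensor factors. -/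
noncomputable def permMat (d k : ℕ) (π : Equiv.Perm (Fin k)) :
    Matrix (Fin k → Fin d) (Fin k → Fin d) ℂ :=
  Matrix.of fun f g => if g = f ∘ π then 1 else 0

/-- The symmetrizer: the orthogonal projection onto the symmetric subspace of the
k-fold tensor power of ℂ^d. -/
noncomputable def symProj (d k : ℕ) : Matrix (Fin k → Fin d) (Fin k → Fin d) ℂ :=
  (1 / (Nat.factorial k : ℂ)) • ∑ π : Equiv.Perm (Fin k), permMat d k π

lemma exists_perm_of_ofFn_perm {N d : ℕ} {f g : Fin N → Fin d}
    (h : List.Perm (List.ofFn f) (List.ofFn g)) : ∃ σ : Equiv.Perm (Fin N), f = g ∘ σ := by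
  refine ⟨(Tuple.sort f).symm.trans (Tuple.sort g), ?_⟩
  have hf : List.ofFn (f ∘ Tuple.sort f) = List.ofFn (g ∘ Tuple.sort g) := by
    refine (fun hp h1 h2 => List.Perm.eq_of_sortedLE h1 h2 hp) ?_ ?_ ?_
    · exact ((Equiv.Perm.ofFn_comp_perm _ f).trans h).trans
        (Equiv.Perm.ofFn_comp_perm _ g).symm
    · exact List.sortedLE_ofFn_iff.2 (Tuple.monotone_sort f)
    · exact List.sortedLE_ofFn_iff.2 (Tuple.monotone_sort g)
  have hf' : f ∘ Tuple.sort f = g ∘ Tuple.sort g := List.ofFn_injective hf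
  funext x
  have := congrFun hf' ((Tuple.sort f).symm x)
  simpa using this

attribute [local instance] arrowAction

lemma orbit_iff_ofFn_perm {N d : ℕ} (f g : Fin N → Fin d) :
    (∃ π : Equiv.Perm (Fin N), π • g = f) ↔ List.Perm (List.ofFn f) (List.ofFn g) := by
  constructor
  · rintro ⟨π, rfl⟩
    have : (π • g) = g ∘ ⇑π⁻¹ := rfl
    rw [this]
    exact Equiv.Perm.ofFn_comp_perm _ g
  · intro h
    obtain ⟨σ, rfl⟩ := exists_perm_of_ofFn_perm h
    refine ⟨σ⁻¹, ?_⟩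
    funext x
    show g ((σ⁻¹)⁻¹ x) = g (σ x)
    simp

/-- The orbit space of `S_N` acting on tuples is the symmetric power. -/
noncomputable def orbitsEquivSym (d N : ℕ) :
    Quotient (MulAction.orbitRel (Equiv.Perm (Fin N)) (Fin N → Fin d)) ≃ Sym (Fin d) N := by
  refine (Quotient.congr (Equiv.vectorEquivFin (Fin d) N).symm ?_).trans Sym.symEquivSym'.symm
  intro f g
  show (f ∈ MulAction.orbit _ g) ↔ _
  rw [MulAction.mem_orbit_iff]
  rw [orbit_iff_ofFn_perm]
  show _ ↔ List.Perm (List.Vector.ofFn f).toList (List.Vector.ofFn g).toList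
  simp [List.Vector.toList_ofFn]

/-- The dimension of the symmetric subspace of N d-dimensional systems is C(d+N-1, N). -/
theorem symProj_trace (d N : ℕ) (hd : 1 ≤ d) :
    (symProj d N).trace = (Nat.choose (d + N - 1) N : ℂ) := by
  classical
  letI : DecidableRel (MulAction.orbitRel (Equiv.Perm (Fin N)) (Fin N → Fin d)).r :=
    fun _ _ => Classical.dec _
  have key := MulAction.sum_card_fixedBy_eq_card_orbits_mul_card_group
    (Equiv.Perm (Fin N)) (Fin N → Fin d)
  have hΩ : Fintype.card
      (Quotient (MulAction.orbitRel (Equiv.Perm (Fin N)) (Fin N → Fin d)))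
      = Nat.choose (d + N - 1) N := by
    rw [Fintype.card_congr (orbitsEquivSym d N), Sym.card_sym_eq_choose, Fintype.card_fin]
  -- trace of each permMat
  have htr : ∀ π : Equiv.Perm (Fin N),
      (permMat d N π).trace = (Fintype.card (MulAction.fixedBy (Fin N → Fin d) π) : ℂ) := by
    intro π
    rw [Matrix.trace]
    have : ∀ f : Fin N → Fin d, (permMat d N π).diag f = if π • f = f then 1 else 0 := by
      intro f
      show (if f = f ∘ ⇑π then 1 else 0 : ℂ) = _
      congr 1
      simp only [eq_iff_iff]
      constructor
      · intro h
        funext x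
        show f (π⁻¹ x) = f x
        have := congrFun h (π⁻¹ x)
        simp only [Function.comp_apply] at this
        rw [this]
        simp
      · intro h
        funext x
        have := congrFun h (π x)
        show f x = f (π x)
        rw [← this]
        show f x = f (π⁻¹ (π x))
        simp
    simp_rw [this]
    rw [Finset.sum_boole]
    have hcard : Fintype.card (MulAction.fixedBy (Fin N → Fin d) π)
        = (Finset.univ.filter (fun f : Fin N → Fin d => π • f = f)).card := by
      rw [← Fintype.card_subtype]
      exact Fintype.card_congr (Equiv.subtypeEquivRight fun _ => Iff.rfl)
    rw [hcard]
  have hsum : ∑ π : Equiv.Perm (Fin N), (permMat d N π).trace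
      = ((Nat.choose (d + N - 1) N : ℕ) * (Nat.factorial N : ℕ) : ℂ) := by
    simp_rw [htr]
    rw [← Nat.cast_sum, key, hΩ, Fintype.card_perm, Fintype.card_fin]
    push_cast
    ring
  rw [symProj, Matrix.trace_smul, Matrix.trace_sum, hsum]
  have hne : (Nat.factorial N : ℂ) ≠ 0 := Nat.cast_ne_zero.mpr (Nat.factorial_ne_zero N)
  rw [smul_eq_mul]
  field_simp
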